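/- Let L be a group, let μ : M → L and ν : N → L be crossed modules of groups over L, with induced mutual actions ᵐn := ^(μ(m))n and ⁿm := ^(ν(n))m, and let (P, p_M : P → M, p_N : P → N, L-actions, h' : M × N → P) be any crossed square of groups over the same μ and ν. Then there exists a unique group homomorphism φ : M ⊗ N → P such that φ(m ⊗ n) = h'(m, n) for all m ∈ M, n ∈ N; moreover p_M ∘ φ = π_M and p_N ∘ φ = π_N, where π_M and π_N are the homomorphisms determined by π_M(m ⊗ n) = m·(ⁿm)⁻¹ and π_N(m ⊗ n) = (ᵐn)·n⁻¹. -/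
import Mathlib


/-- A crossed module of groups: a homomorphism `μ : M → L` together with an action of `L`
on `M` by automorphisms, such that `μ` is equivariant (with `L` acting on itself by
conjugation) and the Peiffer identity holds. -/
def IsCrossedModule {M L : Type*} [Group M] [Group L]
    (μ : M →* L) (σ : L →* MulAut M) : Prop :=
  (∀ l m, μ (σ l m) = l * μ m * l⁻¹) ∧ ∀ m m', σ (μ m) m' = m * m' * m⁻¹

/-- The defining relations of the Brown–Loday non-abelian tensor product of two groups `M`
and `N` acting on each other via `actM : M → N → N` and `actN : N → M → M` (and on
themselves by conjugation): `(m * m') ⊗ n = (ᵐm' ⊗ ᵐn) * (m ⊗ n)` and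
`m ⊗ (n * n') = (m ⊗ n) * (ⁿm ⊗ ⁿn')`. -/
def tensorRels (M N : Type*) [Group M] [Group N]
    (actM : M → N → N) (actN : N → M → M) : Set (FreeGroup (M × N)) :=
  (Set.range fun p : M × M × N =>
    FreeGroup.of (p.1 * p.2.1, p.2.2) *
      (FreeGroup.of (p.1 * p.2.1 * p.1⁻¹, actM p.1 p.2.2) * FreeGroup.of (p.1, p.2.2))⁻¹) ∪
  (Set.range fun p : M × N × N =>
    FreeGroup.of (p.1, p.2.1 * p.2.2) *
      (FreeGroup.of (p.1, p.2.1) *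
        FreeGroup.of (actN p.2.1 p.1, p.2.1 * p.2.2 * p.2.1⁻¹))⁻¹)

/-- The Brown–Loday non-abelian tensor product `M ⊗ N` of groups `M` and `N` acting on
each other, presented by generators `m ⊗ n` and the tensor relations. -/
abbrev NATensor (M N : Type*) [Group M] [Group N]
    (actM : M → N → N) (actN : N → M → M) : Type _ :=
  PresentedGroup (tensorRels M N actM actN)

/-- The generator `m ⊗ n` of the non-abelian tensor product. -/
abbrev tensorOf {M N : Type*} [Group M] [Group N]
    {actM : M → N → N} {actN : N → M → M} (m : M) (n : N) :
    NATensor M N actM actN :=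
  PresentedGroup.of (m, n)

/-- A crossed square of groups (axioms (X0)–(X4) of Guin-Waléry–Brown–Loday), given by the
commutative square `μ ∘ p_M = ν ∘ p_N`, actions `σM`, `σN`, `σP` of `L` on `M`, `N`, `P`
and a function `h : M × N → P`. -/
def IsCrossedSquareGrp {P M N L : Type*} [Group P] [Group M] [Group N] [Group L]
    (pM : P →* M) (pN : P →* N) (μ : M →* L) (ν : N →* L)
    (σM : L →* MulAut M) (σN : L →* MulAut N) (σP : L →* MulAut P)
    (h : M → N → P) : Prop :=
  -- commutative square
  μ.comp pM = ν.comp pN ∧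
  -- (X.0)
  (∀ m m' n, h (m * m') n = σP (μ m) (h m' n) * h m n) ∧
  (∀ m n n', h m (n * n') = h m n * σP (ν n) (h m n')) ∧
  -- (X.1)
  (∀ l p, pM (σP l p) = σM l (pM p)) ∧
  (∀ l p, pN (σP l p) = σN l (pN p)) ∧
  IsCrossedModule μ σM ∧ IsCrossedModule ν σN ∧ IsCrossedModule (μ.comp pM) σP ∧
  -- (X.2)
  (∀ m n, pM (h m n) = m * (σM (ν n) m)⁻¹) ∧
  (∀ m n, pN (h m n) = σN (μ m) n * n⁻¹) ∧
  -- (X.3)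
  (∀ p n, h (pM p) n = p * (σP (ν n) p)⁻¹) ∧
  (∀ m p, h m (pN p) = σP (μ m) p * p⁻¹) ∧
  -- (X.4)
  (∀ l m n, σP l (h m n) = h (σM l m) (σN l n))

/-- The universal property of the non-abelian tensor product: for any crossed square
`(P, p_M, p_N, h')` over the crossed modules `μ : M → L`, `ν : N → L`, there is a unique
homomorphism `φ : M ⊗ N → P` with `φ(m ⊗ n) = h'(m, n)`; moreover `p_M ∘ φ = π_M` and
`p_N ∘ φ = π_N`. -/
theorem tensor_universal_property
    {M N L P : Type*} [Group M] [Group N] [Group L] [Group P]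
    (μ : M →* L) (ν : N →* L) (σM : L →* MulAut M) (σN : L →* MulAut N)
    (hμ : IsCrossedModule μ σM) (hν : IsCrossedModule ν σN)
    (pM : P →* M) (pN : P →* N) (σP : L →* MulAut P) (h' : M → N → P)
    (hsq : IsCrossedSquareGrp pM pN μ ν σM σN σP h')
    (πM : NATensor M N (fun m n => σN (μ m) n) (fun n m => σM (ν n) m) →* M)
    (hπM : ∀ (m : M) (n : N), πM (tensorOf m n) = m * (σM (ν n) m)⁻¹)
    (πN : NATensor M N (fun m n => σN (μ m) n) (fun n m => σM (ν n) m) →* N)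
    (hπN : ∀ (m : M) (n : N), πN (tensorOf m n) = σN (μ m) n * n⁻¹) :
    (∃! φ : NATensor M N (fun m n => σN (μ m) n) (fun n m => σM (ν n) m) →* P,
      ∀ (m : M) (n : N), φ (tensorOf m n) = h' m n) ∧
    (∀ φ : NATensor M N (fun m n => σN (μ m) n) (fun n m => σM (ν n) m) →* P,
      (∀ (m : M) (n : N), φ (tensorOf m n) = h' m n) →
        pM.comp φ = πM ∧ pN.comp φ = πN) := by
  obtain ⟨hcomm, hX0a, hX0b, hX1a, hX1b, _, _, _, hX2a, hX2b, hX3a, hX3b, hX4⟩ := hsq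
  have hrel : ∀ r ∈ tensorRels M N (fun m n => σN (μ m) n) (fun n m => σM (ν n) m),
      FreeGroup.lift (fun p : M × N => h' p.1 p.2) r = 1 := by
    rintro r (⟨⟨m, m', n⟩, rfl⟩ | ⟨⟨m, n, n'⟩, rfl⟩) <;>
      simp only [map_mul, map_inv, FreeGroup.lift_apply_of, mul_inv_eq_one, mul_inv_rev]
    · rw [hX0a, hX4, hμ.2]; group
    · rw [hX0b, hX4, hν.2]; group
  refine ⟨⟨PresentedGroup.toGroup hrel, fun m n => PresentedGroup.toGroup.of hrel,
    fun φ hφ => PresentedGroup.ext fun ⟨m, n⟩ => by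
      rw [hφ m n, PresentedGroup.toGroup.of hrel]⟩, fun φ hφ => ?_⟩
  constructor <;> refine PresentedGroup.ext fun ⟨m, n⟩ => ?_
  · show pM (φ (tensorOf m n)) = _
    rw [hφ, hX2a, hπM]
  · show pN (φ (tensorOf m n)) = _
    rw [hφ, hX2b, hπN]
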